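/- Fenchel–Rockafellar duality: let E be a locally convex Hausdorff real topological vector space with dual E*, f : E → ℝ ∪ {+∞} proper convex, g : E → ℝ ∪ {−∞} proper concave. Suppose there is a point x₀ at which f is continuous and both f(x₀) and g(x₀) are finite. Then inf_{x∈E}(f(x) − g(x)) = max_{y∈E*}(g_*(y) − f*(y)), and the maximum on the right is attained. -/

import Mathlib

noncomputable section

variable {E : Type*} [AddCommGroup E] [Module ℝ E] [TopologicalSpace E]
  [IsTopologicalAddGroup E] [ContinuousSMul ℝ E] [LocallyConvexSpace ℝ E] [T2Space E]

/-- Convex conjugate `f*(y) = sup_x (⟨y,x⟩ − f(x))` over the continuous dual. -/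
def fconj (f : E → EReal) (y : E →L[ℝ] ℝ) : EReal :=
  ⨆ x, (((y x : ℝ) : EReal) - f x)

/-- Concave conjugate `g_*(y) = inf_x (⟨y,x⟩ − g(x))`. -/
def gconj (g : E → EReal) (y : E →L[ℝ] ℝ) : EReal :=
  ⨅ x, (((y x : ℝ) : EReal) - g x)

set_option linter.unusedSectionVars false
set_option linter.unusedVariables false

lemma ereal_exists_real {a : EReal} (h1 : a ≠ ⊥) (h2 : a ≠ ⊤) : ∃ r : ℝ, a = (r : EReal) :=
  ⟨a.toReal, (EReal.coe_toReal h2 h1).symm⟩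

set_option linter.unusedSectionVars false

lemma fr_weak_duality (f g : E → EReal)
    (hfnotbot : ∀ x, f x ≠ ⊥) (hgnottop : ∀ x, g x ≠ ⊤) (y : E →L[ℝ] ℝ) :
    gconj g y - fconj f y ≤ ⨅ x : E, f x - g x := by
  refine le_iInf fun x => ?_
  rcases eq_or_ne (f x) ⊤ with hft | hft
  · have : f x - g x = ⊤ := by
      rcases eq_or_ne (g x) ⊥ with hgb | hgb
      · rw [hft, hgb, EReal.top_sub_bot]
      · obtain ⟨b, hb⟩ := ereal_exists_real hgb (hgnottop x)
        rw [hft, hb, EReal.top_sub_coe]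
    rw [this]; exact le_top
  rcases eq_or_ne (g x) ⊥ with hgb | hgb
  · have : f x - g x = ⊤ := by
      obtain ⟨a, ha⟩ := ereal_exists_real (hfnotbot x) hft
      rw [ha, hgb, EReal.coe_sub_bot]
    rw [this]; exact le_top
  obtain ⟨a, ha⟩ := ereal_exists_real (hfnotbot x) hft
  obtain ⟨b, hb⟩ := ereal_exists_real hgb (hgnottop x)
  have h1 : gconj g y ≤ ((y x : ℝ) : EReal) - g x := iInf_le _ x
  have h2 : ((y x : ℝ) : EReal) - f x ≤ fconj f y :=
    le_iSup (fun x : E => (((y x : ℝ) : EReal) - f x)) x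
  calc gconj g y - fconj f y ≤ (((y x : ℝ) : EReal) - g x) - (((y x : ℝ) : EReal) - f x) :=
        EReal.sub_le_sub h1 h2
    _ = f x - g x := by
        rw [ha, hb, ← EReal.coe_sub, ← EReal.coe_sub, ← EReal.coe_sub, ← EReal.coe_sub]
        norm_cast; ring

/-- Fenchel–Rockafellar duality: let `E` be a locally convex Hausdorff real
topological vector space, `f` proper convex, `g` proper concave, and suppose `f` is
continuous at some point `x₀` where both `f(x₀)` and `g(x₀)` are finite.  Then
`inf_x (f(x) − g(x)) = max_{y ∈ E*} (g_*(y) − f*(y))`, the maximum being attained. -/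
theorem fenchel_rockafellar_duality
    (f g : E → EReal)
    (hfnotbot : ∀ x, f x ≠ ⊥) (hfproper : ∃ x, f x ≠ ⊤)
    (hgnottop : ∀ x, g x ≠ ⊤) (hgproper : ∃ x, g x ≠ ⊥)
    (hfconv : ∀ (x y : E) (t : ℝ), 0 ≤ t → t ≤ 1 →
      f (t • x + (1 - t) • y) ≤ ((t : EReal)) * f x + (((1 - t : ℝ) : EReal)) * f y)
    (hgconc : ∀ (x y : E) (t : ℝ), 0 ≤ t → t ≤ 1 →
      ((t : EReal)) * g x + (((1 - t : ℝ) : EReal)) * g y ≤ g (t • x + (1 - t) • y))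
    (x₀ : E) (hfcont : ContinuousAt f x₀)
    (hfx₀ : f x₀ ≠ ⊤ ∧ f x₀ ≠ ⊥) (hgx₀ : g x₀ ≠ ⊤ ∧ g x₀ ≠ ⊥) :
    ∃ y : E →L[ℝ] ℝ,
      (⨅ x : E, f x - g x) = gconj g y - fconj f y ∧
      ∀ y' : E →L[ℝ] ℝ, gconj g y' - fconj f y' ≤ gconj g y - fconj f y := by
  obtain ⟨r₀, hr₀⟩ := ereal_exists_real hfx₀.2 hfx₀.1
  obtain ⟨b₀, hb₀⟩ := ereal_exists_real hgx₀.2 hgx₀.1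
  rcases eq_or_ne (⨅ x : E, f x - g x) ⊥ with hbot | hne
  · -- degenerate case: the infimum is −∞
    have h0 : gconj g 0 - fconj f 0 = ⊥ :=
      le_bot_iff.mp ((fr_weak_duality f g hfnotbot hgnottop 0).trans_eq hbot)
    refine ⟨0, by rw [hbot, h0], fun y' => ?_⟩
    rw [h0]
    exact (fr_weak_duality f g hfnotbot hgnottop y').trans_eq hbot
  -- main case: the infimum is a real number mr
  have hmtop : (⨅ x : E, f x - g x) ≠ ⊤ := by
    refine ne_top_of_le_ne_top ?_ (iInf_le _ x₀)
    rw [hr₀, hb₀, ← EReal.coe_sub]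
    exact EReal.coe_ne_top _
  obtain ⟨mr, hmr⟩ := ereal_exists_real hne hmtop
  -- the two convex sets
  set A : Set (E × ℝ) := {p | f p.1 < ((p.2 : ℝ) : EReal)} with hA
  set B : Set (E × ℝ) := {p | ((p.2 : ℝ) : EReal) ≤ g p.1 + (mr : EReal)} with hB
  have hAconv : Convex ℝ A := by
    rintro p hp q hq s t hs ht hst
    have hts : t = 1 - s := by linarith
    subst hts
    have hp : f p.1 < ((p.2 : ℝ) : EReal) := hp
    have hq : f q.1 < ((q.2 : ℝ) : EReal) := hq
    have hfp_top : f p.1 ≠ ⊤ := (hp.trans (EReal.coe_lt_top p.2)).ne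
    have hfq_top : f q.1 ≠ ⊤ := (hq.trans (EReal.coe_lt_top q.2)).ne
    obtain ⟨a1, ha1⟩ := ereal_exists_real (hfnotbot p.1) hfp_top
    obtain ⟨a2, ha2⟩ := ereal_exists_real (hfnotbot q.1) hfq_top
    have hp' : a1 < p.2 := by rw [ha1] at hp; exact_mod_cast hp
    have hq' : a2 < q.2 := by rw [ha2] at hq; exact_mod_cast hq
    have hkey := hfconv p.1 q.1 s hs (by linarith)
    show f (s • p + (1 - s) • q).1 < (((s • p + (1 - s) • q).2 : ℝ) : EReal)
    have hfst : (s • p + (1 - s) • q).1 = s • p.1 + (1 - s) • q.1 := rfl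
    have hsnd : (s • p + (1 - s) • q).2 = s * p.2 + (1 - s) * q.2 := rfl
    rw [hfst, hsnd]
    calc f (s • p.1 + (1 - s) • q.1)
        ≤ (s : EReal) * f p.1 + ((1 - s : ℝ) : EReal) * f q.1 := hkey
      _ = ((s * a1 + (1 - s) * a2 : ℝ) : EReal) := by
          rw [ha1, ha2, ← EReal.coe_mul, ← EReal.coe_mul, ← EReal.coe_add]
      _ < ((s * p.2 + (1 - s) * q.2 : ℝ) : EReal) := by
          rw [EReal.coe_lt_coe_iff]
          rcases eq_or_lt_of_le hs with h0 | h0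
          · rw [← h0]; simpa using hq'
          · have h1 := mul_lt_mul_of_pos_left hp' h0
            have h2 := mul_le_mul_of_nonneg_left hq'.le (by linarith : (0:ℝ) ≤ 1 - s)
            linarith
  have hBconv : Convex ℝ B := by
    rintro p hp q hq s t hs ht hst
    have hts : t = 1 - s := by linarith
    subst hts
    have hp : ((p.2 : ℝ) : EReal) ≤ g p.1 + (mr : EReal) := hp
    have hq : ((q.2 : ℝ) : EReal) ≤ g q.1 + (mr : EReal) := hq
    have hgp_bot : g p.1 ≠ ⊥ := by
      intro h
      rw [h, EReal.bot_add] at hp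
      exact (EReal.coe_ne_bot _) (le_bot_iff.mp hp)
    have hgq_bot : g q.1 ≠ ⊥ := by
      intro h
      rw [h, EReal.bot_add] at hq
      exact (EReal.coe_ne_bot _) (le_bot_iff.mp hq)
    obtain ⟨b1, hb1⟩ := ereal_exists_real hgp_bot (hgnottop p.1)
    obtain ⟨b2, hb2⟩ := ereal_exists_real hgq_bot (hgnottop q.1)
    have hp' : p.2 ≤ b1 + mr := by
      rw [hb1, ← EReal.coe_add] at hp; exact_mod_cast hp
    have hq' : q.2 ≤ b2 + mr := by
      rw [hb2, ← EReal.coe_add] at hq; exact_mod_cast hq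
    have hkey := hgconc p.1 q.1 s hs (by linarith)
    show (((s • p + (1 - s) • q).2 : ℝ) : EReal)
        ≤ g (s • p + (1 - s) • q).1 + (mr : EReal)
    have hfst : (s • p + (1 - s) • q).1 = s • p.1 + (1 - s) • q.1 := rfl
    have hsnd : (s • p + (1 - s) • q).2 = s * p.2 + (1 - s) * q.2 := rfl
    rw [hfst, hsnd]
    calc ((s * p.2 + (1 - s) * q.2 : ℝ) : EReal)
        ≤ ((s * b1 + (1 - s) * b2 + mr : ℝ) : EReal) := by
          rw [EReal.coe_le_coe_iff]
          have h1 := mul_le_mul_of_nonneg_left hp' hs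
          have h2 := mul_le_mul_of_nonneg_left hq' (by linarith : (0:ℝ) ≤ 1 - s)
          nlinarith
      _ = ((s * b1 + (1 - s) * b2 : ℝ) : EReal) + (mr : EReal) := by
          rw [← EReal.coe_add]
      _ ≤ g (s • p.1 + (1 - s) • q.1) + (mr : EReal) := by
          refine add_le_add ?_ le_rfl
          calc ((s * b1 + (1 - s) * b2 : ℝ) : EReal)
              = (s : EReal) * g p.1 + ((1 - s : ℝ) : EReal) * g q.1 := by
                rw [hb1, hb2, ← EReal.coe_mul, ← EReal.coe_mul, ← EReal.coe_add]
            _ ≤ _ := hkey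
  -- interior points of A above x₀
  have hApts : ∀ t : ℝ, r₀ < t → (x₀, t) ∈ interior A := by
    intro t htr
    rw [mem_interior_iff_mem_nhds]
    set c : ℝ := (r₀ + t) / 2 with hc
    have hc1 : r₀ < c := by rw [hc]; linarith
    have hc2 : c < t := by rw [hc]; linarith
    have hU : f ⁻¹' (Set.Iio ((c : ℝ) : EReal)) ∈ nhds x₀ := by
      apply hfcont
      apply Iio_mem_nhds
      rw [hr₀]
      exact_mod_cast hc1
    have hV : Set.Ioi c ∈ nhds t := Ioi_mem_nhds hc2
    refine Filter.mem_of_superset (prod_mem_nhds hU hV) ?_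
    rintro ⟨x, s⟩ ⟨hx, hs⟩
    have hs' : (c : EReal) < ((s : ℝ) : EReal) := by exact_mod_cast hs
    exact lt_trans hx hs'
  -- disjointness
  have hdisj : Disjoint (interior A) B := by
    rw [Set.disjoint_left]
    rintro p hpA hpB
    have hpA0 : p ∈ A := interior_subset hpA
    have hpA' : f p.1 < ((p.2 : ℝ) : EReal) := hpA0
    have hpB : ((p.2 : ℝ) : EReal) ≤ g p.1 + (mr : EReal) := hpB
    have hgp_bot : g p.1 ≠ ⊥ := by
      intro h
      rw [h, EReal.bot_add] at hpB
      exact (EReal.coe_ne_bot _) (le_bot_iff.mp hpB)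
    obtain ⟨b, hb⟩ := ereal_exists_real hgp_bot (hgnottop p.1)
    have hfp_top : f p.1 ≠ ⊤ := (hpA'.trans (EReal.coe_lt_top p.2)).ne
    obtain ⟨a, ha⟩ := ereal_exists_real (hfnotbot p.1) hfp_top
    have h1 : a < p.2 := by rw [ha] at hpA'; exact_mod_cast hpA'
    have h2 : p.2 ≤ b + mr := by
      rw [hb, ← EReal.coe_add] at hpB; exact_mod_cast hpB
    have h3 : (mr : EReal) ≤ ((a - b : ℝ) : EReal) := by
      rw [← hmr, EReal.coe_sub, ← ha, ← hb]
      exact iInf_le _ p.1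
    have h4 : mr ≤ a - b := by exact_mod_cast h3
    linarith
  -- separation
  obtain ⟨φ, u, hsep1, hsep2⟩ :=
    geometric_hahn_banach_open (hAconv.interior) isOpen_interior hBconv hdisj
  -- all of A satisfies the weak inequality
  have hA_le : ∀ p ∈ A, φ p ≤ u := by
    intro p hp
    have hz : ((x₀, r₀ + 1) : E × ℝ) ∈ interior A := hApts (r₀ + 1) (by linarith)
    have hseg : openSegment ℝ ((x₀, r₀ + 1) : E × ℝ) p ⊆ interior A :=
      hAconv.openSegment_interior_self_subset_interior hz hp
    have hclos : p ∈ closure (openSegment ℝ ((x₀, r₀ + 1) : E × ℝ) p) :=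
      segment_subset_closure_openSegment (right_mem_segment ℝ _ _)
    have hcl : p ∈ closure {q : E × ℝ | φ q ≤ u} := by
      refine closure_mono ?_ hclos
      intro q hq
      exact (hsep1 q (hseg hq)).le
    have : IsClosed {q : E × ℝ | φ q ≤ u} :=
      isClosed_le φ.continuous continuous_const
    rwa [this.closure_eq] at hcl
  -- decomposition of φ
  have hdecomp : ∀ (x : E) (t : ℝ), φ (x, t) = φ (x, 0) + t * φ (0, 1) := by
    intro x t
    have h : ((x, t) : E × ℝ) = (x, 0) + t • ((0 : E), (1 : ℝ)) := by
      simp [Prod.ext_iff]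
    rw [h, map_add, map_smul, smul_eq_mul]
  obtain ⟨c, hcdef⟩ : ∃ c : ℝ, φ ((0 : E), (1 : ℝ)) = c := ⟨_, rfl⟩
  rw [hcdef] at hdecomp
  -- c < 0
  have hcneg : c < 0 := by
    rcases lt_trichotomy c 0 with h | h | h
    · exact h
    · exfalso
      have h1 : φ (x₀, r₀ + 1) < u := hsep1 _ (hApts (r₀ + 1) (by linarith))
      have h2 : u ≤ φ (x₀, b₀ + mr) := by
        apply hsep2
        show ((b₀ + mr : ℝ) : EReal) ≤ g x₀ + (mr : EReal)
        rw [hb₀, ← EReal.coe_add]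
      rw [hdecomp, h] at h1 h2
      linarith
    · exfalso
      set t : ℝ := max (r₀ + 1) ((u - φ (x₀, 0) + 1) / c) with htdef
      have ht1 : r₀ < t := lt_of_lt_of_le (by linarith) (le_max_left _ _)
      have h1 : φ (x₀, t) < u := hsep1 _ (hApts t ht1)
      rw [hdecomp] at h1
      have ht2 : (u - φ (x₀, 0) + 1) / c ≤ t := le_max_right _ _
      have ht3 : u - φ (x₀, 0) + 1 ≤ t * c := by
        rw [div_le_iff₀ h] at ht2; linarith
      linarith
  obtain ⟨d, hd_eq⟩ : ∃ d : ℝ, d = -c := ⟨_, rfl⟩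
  have hd : 0 < d := by rw [hd_eq]; linarith
  have hd' : d ≠ 0 := hd.ne'
  have hcd : c = -d := by rw [hd_eq]; ring
  rw [hcd] at hdecomp
  set y : E →L[ℝ] ℝ := d⁻¹ • (φ.comp (ContinuousLinearMap.inl ℝ E ℝ)) with hydef
  have hyx : ∀ x : E, y x = φ (x, 0) / d := by
    intro x
    rw [hydef]
    simp [ContinuousLinearMap.smul_apply, div_eq_inv_mul]
  obtain ⟨r, hrdef⟩ : ∃ r : ℝ, r = u / d := ⟨_, rfl⟩
  -- key bound on f side
  have hf_real : ∀ (x : E) (a : ℝ), f x = (a : EReal) → y x - a ≤ r := by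
    intro x a ha
    have key : φ (x, 0) - a * d ≤ u := by
      by_contra hcon
      push_neg at hcon
      obtain ⟨ε, hεdef⟩ : ∃ ε : ℝ, ε = (φ (x, 0) - a * d - u) / 2 := ⟨_, rfl⟩
      have hε : 0 < ε := by rw [hεdef]; linarith
      have hmem : ((x, a + ε / d) : E × ℝ) ∈ A := by
        show f x < (((a + ε / d : ℝ)) : EReal)
        rw [ha, EReal.coe_lt_coe_iff]
        have : 0 < ε / d := div_pos hε hd
        linarith
      have h1 := hA_le _ hmem
      rw [hdecomp] at h1
      have hdd : (a + ε / d) * -d = -(a * d) - ε := by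
        field_simp
        ring
      rw [hdd] at h1
      linarith
    rw [hyx, hrdef]
    have h3 : (φ (x, 0) - a * d) / d ≤ u / d := (div_le_div_iff_of_pos_right hd).mpr key
    have e : (φ (x, 0) - a * d) / d = φ (x, 0) / d - a := by
      field_simp
    rw [← e]
    exact h3
  have hfconj_le : fconj f y ≤ (r : EReal) := by
    refine iSup_le fun x => ?_
    rcases eq_or_ne (f x) ⊤ with hft | hft
    · rw [hft, EReal.sub_top]; exact bot_le
    obtain ⟨a, ha⟩ := ereal_exists_real (hfnotbot x) hft
    rw [ha, ← EReal.coe_sub, EReal.coe_le_coe_iff]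
    exact hf_real x a ha
  -- key bound on g side
  have hgconj_ge : ((mr + r : ℝ) : EReal) ≤ gconj g y := by
    refine le_iInf fun x => ?_
    rcases eq_or_ne (g x) ⊥ with hgb | hgb
    · rw [hgb, EReal.coe_sub_bot]; exact le_top
    obtain ⟨b, hb⟩ := ereal_exists_real hgb (hgnottop x)
    rw [hb, ← EReal.coe_sub, EReal.coe_le_coe_iff]
    have hmem : ((x, b + mr) : E × ℝ) ∈ B := by
      show ((b + mr : ℝ) : EReal) ≤ g x + (mr : EReal)
      rw [hb, ← EReal.coe_add]
    have h1 := hsep2 _ hmem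
    rw [hdecomp] at h1
    have h2 : u ≤ φ (x, 0) - (b + mr) * d := by nlinarith [h1]
    rw [hyx, hrdef]
    have h3 : (mr * d + u) / d ≤ (φ (x, 0) - b * d) / d := by
      apply (div_le_div_iff_of_pos_right hd).mpr
      nlinarith [h2]
    have e1 : (mr * d + u) / d = mr + u / d := by field_simp
    have e2 : (φ (x, 0) - b * d) / d = φ (x, 0) / d - b := by field_simp
    rw [e1, e2] at h3
    linarith
  -- fconj f y is a real number
  have hfconj_bot : fconj f y ≠ ⊥ := by
    have h1 : ((y x₀ - r₀ : ℝ) : EReal) ≤ fconj f y := by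
      have := le_iSup (fun x : E => (((y x : ℝ) : EReal) - f x)) x₀
      rwa [hr₀, ← EReal.coe_sub] at this
    intro h
    rw [h, le_bot_iff] at h1
    exact (EReal.coe_ne_bot _) h1
  have hfconj_top : fconj f y ≠ ⊤ :=
    ne_top_of_le_ne_top (EReal.coe_ne_top r) hfconj_le
  obtain ⟨F, hF⟩ := ereal_exists_real hfconj_bot hfconj_top
  have hFr : F ≤ r := by rw [hF] at hfconj_le; exact_mod_cast hfconj_le
  -- gconj g y is a real number
  have hgconj_top : gconj g y ≠ ⊤ := by
    have h1 : gconj g y ≤ ((y x₀ - b₀ : ℝ) : EReal) := by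
      have := iInf_le (fun x : E => (((y x : ℝ) : EReal) - g x)) x₀
      rwa [hb₀, ← EReal.coe_sub] at this
    exact ne_top_of_le_ne_top (EReal.coe_ne_top _) h1
  have hgconj_bot : gconj g y ≠ ⊥ := by
    intro h
    rw [h, le_bot_iff] at hgconj_ge
    exact (EReal.coe_ne_bot _) hgconj_ge
  obtain ⟨G, hG⟩ := ereal_exists_real hgconj_bot hgconj_top
  have hGr : mr + r ≤ G := by rw [hG] at hgconj_ge; exact_mod_cast hgconj_ge
  -- strong duality
  have hstrong : (mr : EReal) ≤ gconj g y - fconj f y := by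
    rw [hF, hG, ← EReal.coe_sub, EReal.coe_le_coe_iff]
    linarith
  have hweak := fr_weak_duality f g hfnotbot hgnottop y
  rw [hmr] at hweak
  have heq : (⨅ x : E, f x - g x) = gconj g y - fconj f y := by
    rw [hmr]
    exact le_antisymm hstrong hweak
  refine ⟨y, heq, fun y' => ?_⟩
  rw [← heq]
  exact fr_weak_duality f g hfnotbot hgnottop y'

end
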